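/- Let u be a C¹ function on an open subset of ℝ × ℝ⁴ with 1 - (u_t)² + |∇u|² > 0 and 1 + |∇u|² > 0. For each ξ ∈ ℝ⁴ \ {0}, the quadratic polynomial p(τ) = τ² - τ ∑_i b_i ξ_i - ∑_{i,j} a_{ij} ξ_i ξ_j, where a_{ij} = δ_{ij}(1 - u_t²/(1+|∇u|²)) - u_{x_i} u_{x_j}/(1+|∇u|²) and b_i = 2 u_{x_i} u_t/(1+|∇u|²), has discriminant Δ satisfying Δ ≥ 4 (1 - u_t² + |∇u|²) |ξ|² / (1+|∇u|²)², and in particular has two distinct real roots. -/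
import Mathlib


noncomputable section

def ut (u : ℝ → (Fin 4 → ℝ) → ℝ) (t : ℝ) (x : Fin 4 → ℝ) : ℝ :=
  deriv (fun s => u s x) t

def ux (u : ℝ → (Fin 4 → ℝ) → ℝ) (j : Fin 4) (t : ℝ) (x : Fin 4 → ℝ) : ℝ :=
  deriv (fun a => u t (Function.update x j a)) (x j)

def gradSq (u : ℝ → (Fin 4 → ℝ) → ℝ) (t : ℝ) (x : Fin 4 → ℝ) : ℝ :=
  ∑ j, (ux u j t x) ^ 2

def Wfun (u : ℝ → (Fin 4 → ℝ) → ℝ) (t : ℝ) (x : Fin 4 → ℝ) : ℝ :=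
  1 - (ut u t x) ^ 2 + gradSq u t x

/-- Principal coefficients `a_{ij}` of the quasilinear wave equation. -/
def acoef (u : ℝ → (Fin 4 → ℝ) → ℝ) (t : ℝ) (x : Fin 4 → ℝ) (i j : Fin 4) : ℝ :=
  (if i = j then (1 : ℝ) else 0) * (1 - (ut u t x) ^ 2 / (1 + gradSq u t x))
    - ux u i t x * ux u j t x / (1 + gradSq u t x)

/-- Coefficients `b_i` of the quasilinear wave equation. -/
def bcoef (u : ℝ → (Fin 4 → ℝ) → ℝ) (t : ℝ) (x : Fin 4 → ℝ) (i : Fin 4) : ℝ :=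
  2 * ux u i t x * ut u t x / (1 + gradSq u t x)

lemma aux_double_sum (f g : Fin 4 → ℝ) (c d : ℝ) :
    ∑ i, ∑ j, ((if i = j then (1:ℝ) else 0) * c - d * (f i * f j)) * g i * g j
      = c * ∑ i, (g i) ^ 2 - d * (∑ i, f i * g i) ^ 2 := by
  have h : ∀ i : Fin 4,
      ∑ j, ((if i = j then (1:ℝ) else 0) * c - d * (f i * f j)) * g i * g j
        = c * (g i) ^ 2 - d * ((f i * g i) * (∑ j, f j * g j)) := by
    intro i
    have h1 : ∀ j ∈ Finset.univ,
        ((if i = j then (1:ℝ) else 0) * c - d * (f i * f j)) * g i * g j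
          = (if i = j then c * g i * g j else 0) - (d * (f i * g i)) * (f j * g j) := by
      intro j _; by_cases hij : i = j <;> simp [hij] <;> ring
    rw [Finset.sum_congr rfl h1, Finset.sum_sub_distrib, Finset.sum_ite_eq,
      ← Finset.mul_sum]
    simp; ring
  rw [Finset.sum_congr rfl (fun i _ => h i), Finset.sum_sub_distrib, ← Finset.mul_sum,
    ← Finset.mul_sum, ← Finset.sum_mul]
  ring

set_option maxHeartbeats 1600000 in
/-- the characteristic polynomial
`p(τ) = τ² - τ ∑ bᵢξᵢ - ∑ a_{ij}ξᵢξⱼ` has discriminant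
`Δ ≥ 4(1 - u_t² + |∇u|²)|ξ|²/(1+|∇u|²)²`; in particular it has two distinct real roots. -/
theorem statement6
    (U : Set (ℝ × (Fin 4 → ℝ))) (hU : IsOpen U)
    (u : ℝ → (Fin 4 → ℝ) → ℝ)
    (hu : ContDiffOn ℝ 1 (fun p : ℝ × (Fin 4 → ℝ) => u p.1 p.2) U)
    (hW : ∀ p ∈ U, 0 < Wfun u p.1 p.2)
    (hG : ∀ p ∈ U, 0 < 1 + gradSq u p.1 p.2)
    (t : ℝ) (x : Fin 4 → ℝ) (hmem : (t, x) ∈ U)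
    (ξ : Fin 4 → ℝ) (hξ : ξ ≠ 0) :
    (4 * Wfun u t x * (∑ i, (ξ i) ^ 2) / (1 + gradSq u t x) ^ 2
        ≤ (∑ i, bcoef u t x i * ξ i) ^ 2 + 4 * ∑ i, ∑ j, acoef u t x i j * ξ i * ξ j)
    ∧ ∃ τ₁ τ₂ : ℝ, τ₁ ≠ τ₂
        ∧ τ₁ ^ 2 - τ₁ * (∑ i, bcoef u t x i * ξ i)
            - (∑ i, ∑ j, acoef u t x i j * ξ i * ξ j) = 0
        ∧ τ₂ ^ 2 - τ₂ * (∑ i, bcoef u t x i * ξ i)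
            - (∑ i, ∑ j, acoef u t x i j * ξ i * ξ j) = 0 := by
  have hD : 0 < 1 + gradSq u t x := hG _ hmem
  have hWp : 0 < Wfun u t x := hW _ hmem
  set v := ut u t x with hv
  set G := gradSq u t x with hGdef
  set S := ∑ i, ux u i t x * ξ i with hS
  set Q := ∑ i, (ξ i) ^ 2 with hQ
  have hQpos : 0 < Q := by
    obtain ⟨i, hi⟩ := Function.ne_iff.mp hξ
    exact Finset.sum_pos' (fun j _ => sq_nonneg _)
      ⟨i, Finset.mem_univ i, pow_pos (abs_pos.mpr hi) 2 |>.trans_eq (sq_abs _)⟩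
  have hWd : Wfun u t x = (1 + G) - v ^ 2 := by
    simp [Wfun, ← hv, ← hGdef]; ring
  have hB : ∑ i, bcoef u t x i * ξ i = 2 * v * S / (1 + G) := by
    have h1 : ∀ i ∈ Finset.univ, bcoef u t x i * ξ i
        = (2 * v / (1 + G)) * (ux u i t x * ξ i) := by
      intro i _; simp only [bcoef, ← hv, ← hGdef]; ring
    rw [Finset.sum_congr rfl h1, ← Finset.mul_sum, ← hS]; ring
  have hA : ∑ i, ∑ j, acoef u t x i j * ξ i * ξ j
      = Q * (1 - v ^ 2 / (1 + G)) - S ^ 2 / (1 + G) := by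
    have := aux_double_sum (fun i => ux u i t x) ξ (1 - v ^ 2 / (1 + G)) (1 / (1 + G))
    have heq : ∀ i j : Fin 4, acoef u t x i j
        = (if i = j then (1:ℝ) else 0) * (1 - v ^ 2 / (1 + G))
          - (1 / (1 + G)) * (ux u i t x * ux u j t x) := by
      intro i j; simp only [acoef, ← hv, ← hGdef]; ring
    calc ∑ i, ∑ j, acoef u t x i j * ξ i * ξ j
        = ∑ i, ∑ j, ((if i = j then (1:ℝ) else 0) * (1 - v ^ 2 / (1 + G))
            - (1 / (1 + G)) * (ux u i t x * ux u j t x)) * ξ i * ξ j := by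
          simp_rw [heq]
      _ = (1 - v ^ 2 / (1 + G)) * ∑ i, (ξ i) ^ 2
            - (1 / (1 + G)) * (∑ i, ux u i t x * ξ i) ^ 2 := this
      _ = Q * (1 - v ^ 2 / (1 + G)) - S ^ 2 / (1 + G) := by rw [← hQ, ← hS]; ring
  have hCS : S ^ 2 ≤ G * Q := by
    have h := Finset.sum_mul_sq_le_sq_mul_sq Finset.univ (fun i => ux u i t x) ξ
    simpa [hS, hQ, hGdef, gradSq] using h
  have hfact : (2 * v * S / (1 + G)) ^ 2
        + 4 * (Q * (1 - v ^ 2 / (1 + G)) - S ^ 2 / (1 + G))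
        - 4 * Wfun u t x * Q / (1 + G) ^ 2
      = (4 * Wfun u t x / (1 + G) ^ 2) * (G * Q - S ^ 2) := by
    rw [hWd]; field_simp; ring
  have hineq : 4 * Wfun u t x * Q / (1 + G) ^ 2
      ≤ (∑ i, bcoef u t x i * ξ i) ^ 2
        + 4 * ∑ i, ∑ j, acoef u t x i j * ξ i * ξ j := by
    rw [hB, hA]
    nlinarith [mul_nonneg (by positivity : (0:ℝ) ≤ 4 * Wfun u t x / (1 + G) ^ 2)
      (sub_nonneg.2 hCS)]
  refine ⟨hineq, ?_⟩
  set B := ∑ i, bcoef u t x i * ξ i with hBdef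
  set A := ∑ i, ∑ j, acoef u t x i j * ξ i * ξ j with hAdef
  have hΔpos : 0 < B ^ 2 + 4 * A := by
    have : 0 < 4 * Wfun u t x * Q / (1 + G) ^ 2 := by positivity
    linarith
  set r := Real.sqrt (B ^ 2 + 4 * A) with hr
  have hr2 : r ^ 2 = B ^ 2 + 4 * A := Real.sq_sqrt hΔpos.le
  have hrpos : 0 < r := Real.sqrt_pos.mpr hΔpos
  refine ⟨(B + r) / 2, (B - r) / 2, by intro h; nlinarith, ?_, ?_⟩
  · linear_combination hr2 / 4
  · linear_combination hr2 / 4
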